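/- For fixed μ > 0, the derivative d'(k) of d(k) = arctanh(μ/k)/k is strictly increasing on (μ, ∞). -/

import Mathlib

noncomputable def artanh (x : ℝ) : ℝ := (1 / 2) * Real.log ((1 + x) / (1 - x))

lemma artanh_eq_log (μ k : ℝ) (hμ : 0 < μ) (hk : μ < k) :
    artanh (μ / k) = (1/2) * (Real.log (k + μ) - Real.log (k - μ)) := by
  have hk0 : (0:ℝ) < k := hμ.trans hk
  have hkm : (0:ℝ) < k - μ := by linarith
  have h3 : (1 + μ/k)/(1 - μ/k) = (k+μ)/(k-μ) := by
    rw [div_eq_div_iff]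
    · field_simp
    · have : 1 - μ/k = (k - μ)/k := by field_simp
      rw [this]; positivity
    · positivity
  unfold artanh
  rw [h3, Real.log_div (by positivity) (ne_of_gt hkm)]

lemma hasDerivAt_F (μ k : ℝ) (hμ : 0 < μ) (hk : μ < k) :
    HasDerivAt (fun k : ℝ => (1/2) * (Real.log (k + μ) - Real.log (k - μ)) / k)
      (((1/2) * (1/(k+μ) - 1/(k-μ)) * k - (1/2)*(Real.log (k+μ) - Real.log (k-μ)) * 1) / k^2) k := by
  have hk0 : (0:ℝ) < k := hμ.trans hk
  have h1 : HasDerivAt (fun k : ℝ => Real.log (k + μ)) (1/(k+μ)) k := by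
    have := ((hasDerivAt_id k).add_const μ).log (by positivity)
    simpa using this
  have h2 : HasDerivAt (fun k : ℝ => Real.log (k - μ)) (1/(k-μ)) k := by
    have hne : k - μ ≠ 0 := by intro h; linarith [(sub_eq_zero.mp h)]
    have := ((hasDerivAt_id k).sub_const μ).log hne
    simpa using this
  exact (((h1.sub h2).const_mul (1/2 : ℝ)).div (hasDerivAt_id k) (ne_of_gt hk0))

lemma hasDerivAt_G (μ k : ℝ) (hμ : 0 < μ) (hk : μ < k) :
    HasDerivAt (fun k : ℝ => (μ*k/(μ^2 - k^2) - (1/2)*(Real.log (k+μ) - Real.log (k-μ))) / k^2)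
      (2*((1/2)*(Real.log (k+μ) - Real.log (k-μ)))/k^3
        + 2*μ*(2*k^2 - μ^2)/(k^2*(k^2-μ^2)^2)) k := by
  have hk0 : (0:ℝ) < k := hμ.trans hk
  have hkm : (0:ℝ) < k - μ := by linarith
  have hkp : (0:ℝ) < k + μ := by linarith
  have hd2 : (0:ℝ) < k^2 - μ^2 := by nlinarith
  have hne : μ^2 - k^2 ≠ 0 := by intro h; nlinarith
  have h1 : HasDerivAt (fun k : ℝ => Real.log (k + μ)) (1/(k+μ)) k := by
    have := ((hasDerivAt_id k).add_const μ).log (ne_of_gt hkp)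
    simpa using this
  have h2 : HasDerivAt (fun k : ℝ => Real.log (k - μ)) (1/(k-μ)) k := by
    have := ((hasDerivAt_id k).sub_const μ).log (ne_of_gt hkm)
    simpa using this
  have hL : HasDerivAt (fun k : ℝ => (1/2)*(Real.log (k+μ) - Real.log (k-μ)))
      ((1/2)*(1/(k+μ) - 1/(k-μ))) k := (h1.sub h2).const_mul (1/2 : ℝ)
  have hc : HasDerivAt (fun k : ℝ => μ * k) μ k := by
    simpa using (hasDerivAt_id k).const_mul μ
  have hd : HasDerivAt (fun k : ℝ => μ^2 - k^2) (-(2*k)) k := by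
    simpa using (hasDerivAt_pow 2 k).const_sub (μ^2)
  have hq : HasDerivAt (fun k : ℝ => μ*k/(μ^2 - k^2))
      ((μ * (μ^2 - k^2) - μ*k*(-(2*k)))/(μ^2 - k^2)^2) k := hc.div hd hne
  have hden : HasDerivAt (fun k : ℝ => k^2) (2*k) k := by
    simpa using hasDerivAt_pow 2 k
  have h := (hq.sub hL).div hden (by positivity)
  refine h.congr_deriv ?_
  simp only [Pi.sub_apply]
  have hlog : Real.log (k+μ) - Real.log (k-μ) = Real.log (k+μ) - Real.log (k-μ) := rfl
  set L := Real.log (k+μ) - Real.log (k-μ) with hLdef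
  field_simp
  ring

theorem depth_deriv_strictMonoOn (μ : ℝ) (hμ : 0 < μ) :
    (∀ k ∈ Set.Ioi μ,
      deriv (fun k : ℝ => artanh (μ / k) / k) k
        = (1 / k ^ 2) * (μ * k / (μ ^ 2 - k ^ 2) - artanh (μ / k))) ∧
    StrictMonoOn (deriv (fun k : ℝ => artanh (μ / k) / k)) (Set.Ioi μ) := by
  have hderiv : ∀ k ∈ Set.Ioi μ,
      deriv (fun k : ℝ => artanh (μ / k) / k) k
        = (1 / k ^ 2) * (μ * k / (μ ^ 2 - k ^ 2) - artanh (μ / k)) := by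
    intro k hk
    rw [Set.mem_Ioi] at hk
    have hk0 : (0:ℝ) < k := hμ.trans hk
    have hkm : (0:ℝ) < k - μ := by linarith
    have hkp : (0:ℝ) < k + μ := by linarith
    have hne : μ^2 - k^2 ≠ 0 := by intro h; nlinarith
    have heq : (fun k : ℝ => artanh (μ / k) / k)
        =ᶠ[nhds k] (fun k : ℝ => (1/2) * (Real.log (k + μ) - Real.log (k - μ)) / k) := by
      filter_upwards [isOpen_Ioi.mem_nhds (Set.mem_Ioi.mpr hk)] with x hx
      rw [artanh_eq_log μ x hμ (Set.mem_Ioi.mp hx)]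
    rw [heq.deriv_eq, (hasDerivAt_F μ k hμ hk).deriv, artanh_eq_log μ k hμ hk]
    set L := Real.log (k+μ) - Real.log (k-μ)
    field_simp
    ring
  refine ⟨hderiv, ?_⟩
  have hG : StrictMonoOn
      (fun k : ℝ => (μ*k/(μ^2 - k^2) - (1/2)*(Real.log (k+μ) - Real.log (k-μ))) / k^2)
      (Set.Ioi μ) := by
    apply strictMonoOn_of_deriv_pos (convex_Ioi μ)
    · intro k hk
      exact (hasDerivAt_G μ k hμ (Set.mem_Ioi.mp hk)).continuousAt.continuousWithinAt
    · intro k hk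
      rw [interior_Ioi] at hk
      rw [Set.mem_Ioi] at hk
      rw [(hasDerivAt_G μ k hμ hk).deriv]
      have hk0 : (0:ℝ) < k := hμ.trans hk
      have hkm : (0:ℝ) < k - μ := by linarith
      have hd2 : (0:ℝ) < k^2 - μ^2 := by nlinarith
      have hLpos : 0 < Real.log (k+μ) - Real.log (k-μ) := by
        have := Real.log_lt_log hkm (by linarith : k - μ < k + μ)
        linarith
      have h2k : (0:ℝ) < 2*k^2 - μ^2 := by nlinarith
      positivity
  intro a ha b hb hab
  have hGa : ∀ k ∈ Set.Ioi μ,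
      deriv (fun k : ℝ => artanh (μ / k) / k) k
        = (μ*k/(μ^2 - k^2) - (1/2)*(Real.log (k+μ) - Real.log (k-μ))) / k^2 := by
    intro k hk
    rw [hderiv k hk, artanh_eq_log μ k hμ (Set.mem_Ioi.mp hk)]
    rw [one_div, inv_mul_eq_div]
  rw [hGa a ha, hGa b hb]
  exact hG ha hb hab
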